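/- In the three-period panel setting, the sequential DID estimator τ̂_sDID = [(1/n₁)Σ_{G}(Y_{i2}−Y_{i1}) − (1/n₀)Σ_{¬G}(Y_{i2}−Y_{i1})] − [(1/n₁)Σ_{G}(Y_{i1}−Y_{i0}) − (1/n₀)Σ_{¬G}(Y_{i1}−Y_{i0})] equals the two-way fixed effects coefficient β̂ from regressing the first-differenced outcome ΔY_{it} = Y_{it} − Y_{i,t−1} on unit fixed effects, time fixed effects, and D_{it} = [G i ∧ t = 2] over t ∈ {1,2}. -/

import Mathlib

open Finset

private lemma foc_zero (S V : ℝ) (hV : 0 ≤ V) (h : ∀ ε : ℝ, 2*ε*S ≤ ε^2*V) : S = 0 := by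
  by_contra hS
  have h1 : 0 < V + 1 := by linarith
  have h2 := h (S/(V+1))
  have h3 : (0:ℝ) < S^2 := by positivity
  rw [div_pow] at h2
  have key := mul_le_mul_of_nonneg_right h2 (sq_nonneg (V+1))
  have hne : (V+1) ≠ 0 := ne_of_gt h1
  have e1 : 2*(S/(V+1))*S*(V+1)^2 = 2*S^2*(V+1) := by field_simp
  have e2 : (S^2/(V+1)^2*V)*(V+1)^2 = S^2*V := by field_simp
  rw [e1, e2] at key
  nlinarith

private lemma perturb_zero {n : ℕ} (r v : Fin n → Fin 2 → ℝ)
    (h : ∀ ε:ℝ, ∑ i, ∑ t, (r i t)^2 ≤ ∑ i, ∑ t, (r i t - ε * v i t)^2) :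
    ∑ i, ∑ t, r i t * v i t = 0 := by
  apply foc_zero _ (∑ i, ∑ t, (v i t)^2) (by positivity)
  intro ε
  have h1 := h ε
  have e : ∀ i : Fin n, ∑ t, (r i t - ε * v i t)^2
      = ∑ t, (r i t)^2 - 2*ε*(∑ t, r i t * v i t) + ε^2 * ∑ t, (v i t)^2 := by
    intro i
    rw [Fin.sum_univ_two, Fin.sum_univ_two, Fin.sum_univ_two, Fin.sum_univ_two]; ring
  simp_rw [e, Finset.sum_add_distrib, Finset.sum_sub_distrib, ← Finset.mul_sum] at h1
  linarith

/-- The sequential DID estimator equals the two-way fixed effects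
coefficient β̂ from regressing the first-differenced outcome ΔY on unit fixed effects,
time fixed effects, and D i t = [G i ∧ t = 1] over the two differenced periods. -/
theorem sequential_did_eq_first_difference_twoway_fe
    (n : ℕ) (Y : Fin n → Fin 3 → ℝ) (G : Fin n → Bool)
    (n1 n0 : ℕ)
    (hn1 : n1 = (univ.filter (fun i => G i = true)).card)
    (hn0 : n0 = (univ.filter (fun i => G i = false)).card)
    (hn1pos : 0 < n1) (hn0pos : 0 < n0)
    (ΔY : Fin n → Fin 2 → ℝ)
    (hΔY : ∀ i (t : Fin 2), ΔY i t = Y i t.succ - Y i t.castSucc)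
    (D : Fin n → Fin 2 → ℝ)
    (hD : ∀ i (t : Fin 2), D i t = if G i = true ∧ t = 1 then (1:ℝ) else 0)
    (α : Fin n → ℝ) (δ : Fin 2 → ℝ) (β : ℝ)
    (hmin : ∀ (α' : Fin n → ℝ) (δ' : Fin 2 → ℝ) (β' : ℝ),
      ∑ i, ∑ t, (ΔY i t - α i - δ t - β * D i t)^2
      ≤ ∑ i, ∑ t, (ΔY i t - α' i - δ' t - β' * D i t)^2) :
    ((1 / (n1:ℝ)) * ∑ i ∈ univ.filter (fun i => G i = true), (Y i 2 - Y i 1)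
      - (1 / (n0:ℝ)) * ∑ i ∈ univ.filter (fun i => G i = false), (Y i 2 - Y i 1))
    - ((1 / (n1:ℝ)) * ∑ i ∈ univ.filter (fun i => G i = true), (Y i 1 - Y i 0)
      - (1 / (n0:ℝ)) * ∑ i ∈ univ.filter (fun i => G i = false), (Y i 1 - Y i 0))
    = β := by
  set r : Fin n → Fin 2 → ℝ := fun i t => ΔY i t - α i - δ t - β * D i t with hr
  have hD0 : ∀ i, D i 0 = 0 := by intro i; rw [hD]; simp
  have hD1 : ∀ i, D i 1 = if G i = true then (1:ℝ) else 0 := by intro i; rw [hD]; simp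
  have eY1 : ∀ i, Y i 2 - Y i 1 = ΔY i 1 := by intro i; rw [hΔY]; rfl
  have eY0 : ∀ i, Y i 1 - Y i 0 = ΔY i 0 := by intro i; rw [hΔY]; rfl
  -- FOC in each α i
  have focα : ∀ i₀ : Fin n, r i₀ 0 + r i₀ 1 = 0 := by
    intro i₀
    have key := perturb_zero r (fun i t => if i = i₀ then 1 else 0) ?_
    · simpa [Fin.sum_univ_two, mul_ite, Finset.sum_add_distrib, Finset.sum_ite_eq'] using key
    · intro ε
      have hm := hmin (fun i => α i + ε * (if i = i₀ then 1 else 0)) δ β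
      refine le_of_le_of_eq hm ?_
      refine Finset.sum_congr rfl fun i _ => Finset.sum_congr rfl fun t _ => ?_
      simp only [hr]; ring
  have hr0 : ∀ i, r i 0 = - r i 1 := fun i => by linarith [focα i]
  -- FOC in δ 1
  have focδ : ∑ i, r i 1 = 0 := by
    have key := perturb_zero r (fun _ t => if t = 1 then 1 else 0) ?_
    · simpa [Fin.sum_univ_two] using key
    · intro ε
      have hm := hmin α (fun t => δ t + ε * (if t = 1 then 1 else 0)) β
      refine le_of_le_of_eq hm ?_
      refine Finset.sum_congr rfl fun i _ => Finset.sum_congr rfl fun t _ => ?_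
      simp only [hr]; ring
  -- FOC in β
  have focβ : ∑ i, r i 1 * D i 1 = 0 := by
    have key := perturb_zero r D ?_
    · calc ∑ i, r i 1 * D i 1 = ∑ i, ∑ t, r i t * D i t := by
            refine Finset.sum_congr rfl fun i _ => ?_
            rw [Fin.sum_univ_two, hD0]; ring
        _ = 0 := key
    · intro ε
      have hm := hmin α δ (β + ε)
      refine le_of_le_of_eq hm ?_
      refine Finset.sum_congr rfl fun i _ => Finset.sum_congr rfl fun t _ => ?_
      simp only [hr]; ring
  set T := univ.filter (fun i => G i = true) with hT
  set C := univ.filter (fun i => G i = false) with hC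
  have hTr1 : ∑ i ∈ T, r i 1 = 0 := by
    calc ∑ i ∈ T, r i 1 = ∑ i, r i 1 * D i 1 := by
          rw [hT, Finset.sum_filter]
          refine Finset.sum_congr rfl fun i _ => ?_
          rw [hD1]; by_cases h : G i = true <;> simp [h]
      _ = 0 := focβ
  have hCr1 : ∑ i ∈ C, r i 1 = 0 := by
    have hCeq : C = univ.filter (fun i => ¬ (G i = true)) := by
      rw [hC]; ext i; simp
    have hsplit := Finset.sum_filter_add_sum_filter_not univ
      (fun i => G i = true) (fun i => r i 1)
    rw [← hT, ← hCeq] at hsplit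
    rw [hTr1, focδ] at hsplit; linarith
  -- per-group difference identities
  have hTd : ∑ i ∈ T, (Y i 2 - Y i 1) - ∑ i ∈ T, (Y i 1 - Y i 0)
      = (n1:ℝ) * (δ 1 - δ 0 + β) := by
    rw [← Finset.sum_sub_distrib]
    have e : ∀ i ∈ T, (Y i 2 - Y i 1) - (Y i 1 - Y i 0)
        = 2 * r i 1 + ((δ 1 - δ 0) + β) := by
      intro i hi
      have hG : G i = true := by simpa [hT] using (Finset.mem_filter.mp hi).2
      have h1 : ΔY i 1 = r i 1 + α i + δ 1 + β := by
        simp only [hr]; rw [hD1, if_pos hG]; ring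
      have h0 : ΔY i 0 = r i 0 + α i + δ 0 := by
        simp only [hr]; rw [hD0]; ring
      rw [eY1 i, eY0 i, h1, h0, hr0 i]; ring
    rw [Finset.sum_congr rfl e, Finset.sum_add_distrib, ← Finset.mul_sum, hTr1,
      Finset.sum_const, nsmul_eq_mul, hn1]
    ring
  have hCd : ∑ i ∈ C, (Y i 2 - Y i 1) - ∑ i ∈ C, (Y i 1 - Y i 0)
      = (n0:ℝ) * (δ 1 - δ 0) := by
    rw [← Finset.sum_sub_distrib]
    have e : ∀ i ∈ C, (Y i 2 - Y i 1) - (Y i 1 - Y i 0)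
        = 2 * r i 1 + (δ 1 - δ 0) := by
      intro i hi
      have hG : G i = false := by simpa [hC] using (Finset.mem_filter.mp hi).2
      have h1 : ΔY i 1 = r i 1 + α i + δ 1 := by
        simp only [hr]; rw [hD1, if_neg (by simp [hG])]; ring
      have h0 : ΔY i 0 = r i 0 + α i + δ 0 := by
        simp only [hr]; rw [hD0]; ring
      rw [eY1 i, eY0 i, h1, h0, hr0 i]; ring
    rw [Finset.sum_congr rfl e, Finset.sum_add_distrib, ← Finset.mul_sum, hCr1,
      Finset.sum_const, nsmul_eq_mul, hn0]
    ring
  have hn1' : (n1:ℝ) ≠ 0 := Nat.cast_ne_zero.mpr hn1pos.ne'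
  have hn0' : (n0:ℝ) ≠ 0 := Nat.cast_ne_zero.mpr hn0pos.ne'
  have goal_eq :
      ((1 / (n1:ℝ)) * ∑ i ∈ T, (Y i 2 - Y i 1)
        - (1 / (n0:ℝ)) * ∑ i ∈ C, (Y i 2 - Y i 1))
      - ((1 / (n1:ℝ)) * ∑ i ∈ T, (Y i 1 - Y i 0)
        - (1 / (n0:ℝ)) * ∑ i ∈ C, (Y i 1 - Y i 0))
      = (1 / (n1:ℝ)) * (∑ i ∈ T, (Y i 2 - Y i 1) - ∑ i ∈ T, (Y i 1 - Y i 0))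
        - (1 / (n0:ℝ)) * (∑ i ∈ C, (Y i 2 - Y i 1) - ∑ i ∈ C, (Y i 1 - Y i 0)) := by
    ring
  rw [goal_eq, hTd, hCd]
  field_simp
  ring
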